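/- arXiv:1404.3906 — 2 statements merged into one kernel-verified Lean document; each statement's English description precedes it below -/
import Mathlib

section
/- Let q ≥ 1 and let w be a binary word of length n with 2^q ≤ n < 2^{q+1} that is a factor of the Thue–Morse word t. Then all occurrence positions of w in t are congruent modulo 2^{q−1}: if w(k) = t(i+k) and w(k) = t(j+k) for all k < n, then i ≡ j (mod 2^{q−1}). (Equivalently, w has an extensible 2^{q−1}-reading frame.) -/
open Fin.NatCast in
/-- The Thue–Morse sequence: sum of binary digits of `n`, mod 2. -/
def tm (n : ℕ) : Fin 2 := ((Nat.digits 2 n).sum : Fin 2)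

/-- The factor of the Thue–Morse word of length `n` starting at position `i`. -/
def tmWord (i n : ℕ) : List (Fin 2) := (List.range n).map (fun j => tm (i + j))

/-- A binary word is a factor of the Thue–Morse word. -/
def IsFactor (w : List (Fin 2)) : Prop := ∃ i : ℕ, w = tmWord i w.length

/-- Number of occurrences of the word `x` as a factor of `u`. -/
def occCount (u x : List (Fin 2)) : ℕ :=
  ((List.range u.length).filter (fun i => (u.drop i).take x.length = x)).length

/-- Two binary words (of equal length) are 2-abelian equivalent: same first letter,
same last letter, and the same number of occurrences of every word of length 2. -/
def TwoAbelianEquiv (u v : List (Fin 2)) : Prop :=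
  u.length = v.length ∧ u.take 1 = v.take 1 ∧
  u.drop (u.length - 1) = v.drop (v.length - 1) ∧
  ∀ x : List (Fin 2), x.length = 2 → occCount u x = occCount v x

/-- `P n` is the 2-abelian complexity of the Thue–Morse word: the number of
2-abelian equivalence classes of factors of length `n`. -/
noncomputable def P (n : ℕ) : ℕ :=
  Nat.card (Quot (fun u v : {w : List (Fin 2) // w.length = n ∧ IsFactor w} =>
    TwoAbelianEquiv u.1 v.1))

/-- `pword w` counts the pairs in `w`: the total number of occurrences of `00` and `11`. -/
def pword (w : List (Fin 2)) : ℕ := occCount w [0, 0] + occCount w [1, 1]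

/-- The set of possible pair counts of Thue–Morse factors of length `n`. -/
def pairs (n : ℕ) : Set ℕ :=
  { m | ∃ w : List (Fin 2), w.length = n ∧ IsFactor w ∧ pword w = m }

/-- The set of possible pair counts of Thue–Morse factors of length `n`
occurring at some odd position (pure odd factors). -/
def PAIRS (n : ℕ) : Set ℕ := { m | ∃ i : ℕ, i % 2 = 1 ∧ pword (tmWord i n) = m }


lemma tm_two_mul (m : ℕ) : tm (2 * m) = tm m := by
  rcases Nat.eq_zero_or_pos m with h | h
  · simp [h]
  · unfold tm
    rw [Nat.digits_def' (by norm_num : 1 < 2) (by omega)]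
    rw [show 2 * m % 2 = 0 by omega, show 2 * m / 2 = m by omega]
    simp

lemma tm_two_mul_add_one (m : ℕ) : tm (2 * m + 1) = tm m + 1 := by
  unfold tm
  rw [Nat.digits_def' (by norm_num : 1 < 2) (by omega)]
  rw [show (2 * m + 1) % 2 = 1 by omega, show (2 * m + 1) / 2 = m by omega]
  rw [List.sum_cons]
  push_cast
  apply Fin.ext
  simp only [Fin.val_add, Fin.val_natCast, Fin.val_one]
  omega

lemma fin2solve (x y z u v : Fin 2) (h0 : x = z + 1) (h1 : x + 1 = u)
    (h2 : y = u + 1) (h3 : y + 1 = v) : u = z ∧ v = u := by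
  subst h0 h1 h2 h3; revert z; decide

lemma no_cube (m : ℕ) (e1 : tm (m + 1) = tm m) (e2 : tm (m + 2) = tm (m + 1)) :
    False := by
  rcases Nat.even_or_odd m with ⟨c, hc⟩ | ⟨c, hc⟩
  · have h1 : tm (m + 1) = tm c + 1 := by
      rw [show m + 1 = 2 * c + 1 by omega, tm_two_mul_add_one]
    have h0 : tm m = tm c := by rw [show m = 2 * c by omega, tm_two_mul]
    rw [h1, h0] at e1
    revert e1; generalize tm c = a; revert a; decide
  · have h1 : tm (m + 1) = tm (c + 1) := by
      rw [show m + 1 = 2 * (c + 1) by omega, tm_two_mul]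
    have h2 : tm (m + 2) = tm (c + 1) + 1 := by
      rw [show m + 2 = 2 * (c + 1) + 1 by omega, tm_two_mul_add_one]
    rw [h1, h2] at e2
    revert e2; generalize tm (c + 1) = a; revert a; decide

lemma tm_aux (a b : ℕ) (h : ∀ k < 4, tm (2 * a + k) = tm (2 * b + 1 + k)) :
    False := by
  have h0 := h 0 (by norm_num)
  have h1 := h 1 (by norm_num)
  have h2 := h 2 (by norm_num)
  have h3 := h 3 (by norm_num)
  rw [show 2 * a + 0 = 2 * a by ring, show 2 * b + 1 + 0 = 2 * b + 1 by ring,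
    tm_two_mul, tm_two_mul_add_one] at h0
  rw [show 2 * b + 1 + 1 = 2 * (b + 1) by ring, tm_two_mul_add_one, tm_two_mul] at h1
  rw [show 2 * a + 2 = 2 * (a + 1) by ring, show 2 * b + 1 + 2 = 2 * (b + 1) + 1 by ring,
    tm_two_mul, tm_two_mul_add_one] at h2
  rw [show 2 * a + 3 = 2 * (a + 1) + 1 by ring, show 2 * b + 1 + 3 = 2 * (b + 2) by ring,
    tm_two_mul_add_one, tm_two_mul] at h3
  obtain ⟨e1, e2⟩ := fin2solve (tm a) (tm (a + 1)) (tm b) (tm (b + 1)) (tm (b + 2)) h0 h1 h2 h3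
  exact no_cube b e1 e2

lemma tm_parity (i j : ℕ) (h : ∀ k < 4, tm (i + k) = tm (j + k)) : i % 2 = j % 2 := by
  by_contra hne
  have hij : (i % 2 = 0 ∧ j % 2 = 1) ∨ (i % 2 = 1 ∧ j % 2 = 0) := by omega
  rcases hij with ⟨hi, hj⟩ | ⟨hi, hj⟩
  · exact tm_aux (i / 2) (j / 2) (fun k hk => by
      rw [show 2 * (i / 2) + k = i + k by omega, show 2 * (j / 2) + 1 + k = j + k by omega]
      exact h k hk)
  · exact tm_aux (j / 2) (i / 2) (fun k hk => by
      rw [show 2 * (j / 2) + k = j + k by omega, show 2 * (i / 2) + 1 + k = i + k by omega]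
      exact (h k hk).symm)

lemma mod_lift (m x y r : ℕ) (h : x % m = y % m) :
    (2 * x + r) % (2 * m) = (2 * y + r) % (2 * m) := by
  rw [Nat.add_mod (2 * x), Nat.add_mod (2 * y), Nat.mul_mod_mul_left,
    Nat.mul_mod_mul_left, h]

lemma tm_key : ∀ q n i j : ℕ, 2 ^ (q + 1) ≤ n →
    (∀ k < n, tm (i + k) = tm (j + k)) → i % 2 ^ q = j % 2 ^ q := by
  intro q
  induction q with
  | zero => intro n i j _ _; simp [Nat.mod_one]
  | succ q ih =>
    intro n i j hn h
    have hpow : (4 : ℕ) ≤ 2 ^ (q + 2) := by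
      calc (4 : ℕ) = 2 ^ 2 := by norm_num
      _ ≤ 2 ^ (q + 2) := Nat.pow_le_pow_right (by norm_num) (by omega)
    have h4 : 4 ≤ n := le_trans hpow hn
    have hp := tm_parity i j (fun k hk => h k (by omega))
    have hhalf : ∀ k < n / 2, tm (i / 2 + k) = tm (j / 2 + k) := by
      intro k hk
      have hk2 : 2 * k + 1 < n := by omega
      rcases (show i % 2 = 0 ∨ i % 2 = 1 by omega) with hr | hr
      · have e1 : tm (i / 2 + k) = tm (i + 2 * k) := by
          rw [show i + 2 * k = 2 * (i / 2 + k) by omega, tm_two_mul]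
        have e2 : tm (j / 2 + k) = tm (j + 2 * k) := by
          rw [show j + 2 * k = 2 * (j / 2 + k) by omega, tm_two_mul]
        rw [e1, e2]; exact h (2 * k) (by omega)
      · have e1 : tm (i / 2 + k) + 1 = tm (i + 2 * k) := by
          rw [show i + 2 * k = 2 * (i / 2 + k) + 1 by omega, tm_two_mul_add_one]
        have e2 : tm (j / 2 + k) + 1 = tm (j + 2 * k) := by
          rw [show j + 2 * k = 2 * (j / 2 + k) + 1 by omega, tm_two_mul_add_one]
        have := h (2 * k) (by omega)
        rw [← e1, ← e2] at this
        exact add_right_cancel this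
    have hn2 : 2 ^ (q + 1) ≤ n / 2 := by
      have : (2 : ℕ) ^ (q + 2) = 2 * 2 ^ (q + 1) := by ring
      omega
    have hmod := ih (n / 2) (i / 2) (j / 2) hn2 hhalf
    have e := mod_lift (2 ^ q) (i / 2) (j / 2) (i % 2) hmod
    rw [show 2 * (i / 2) + i % 2 = i by omega, show 2 * (j / 2) + i % 2 = j by omega] at e
    rw [show (2 : ℕ) ^ (q + 1) = 2 * 2 ^ q by ring]
    exact e

theorem thueMorse_extensible_reading_frame (q n : ℕ) (hq : 1 ≤ q)
    (h1 : 2 ^ q ≤ n) (h2 : n < 2 ^ (q + 1))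
    (w : ℕ → Fin 2) (i j : ℕ)
    (hi : ∀ k < n, w k = tm (i + k)) (hj : ∀ k < n, w k = tm (j + k)) :
    i % 2 ^ (q - 1) = j % 2 ^ (q - 1) := by
  have hkey := tm_key (q - 1) n i j
    (by rw [show q - 1 + 1 = q by omega]; exact h1)
    (fun k hk => (hi k hk).symm.trans (hj k hk))
  exact hkey
end

section
/- For every n, the set pairs(n) is an interval of integers: there exist a ≤ b with pairs(n) = {a, a+1, …, b}; and for every n the set PAIRS(2n) is likewise an interval of integers. -/
/- ### Auxiliary lemmas -/

lemma tm_even' (m : ℕ) : tm (2*m) = tm m := by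
  rcases Nat.eq_zero_or_pos m with h|h
  · simp [h]
  · unfold tm
    rw [Nat.digits_def' (by norm_num) (by omega)]
    simp [Nat.mul_div_cancel_left, Nat.mul_mod_right]

lemma tm_odd' (m : ℕ) : tm (2*m+1) = tm m + 1 := by
  unfold tm
  rw [Nat.digits_def' (by norm_num) (by omega),
    show (2*m+1) % 2 = 1 from by omega, show (2*m+1) / 2 = m from by omega]
  push_cast
  simp [add_comm]
  simp [Fin.ext_iff, Fin.val_add, Fin.val_natCast]; omega

lemma tm_ne' (m : ℕ) : tm (2*m) ≠ tm (2*m+1) := by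
  rw [tm_even', tm_odd']
  generalize tm m = x
  fin_cases x <;> decide

lemma tmWord_length (i n : ℕ) : (tmWord i n).length = n := by simp [tmWord]

lemma tmSlice (i n j : ℕ) (h : j + 2 ≤ n) :
    ((tmWord i n).drop j).take 2 = [tm (i+j), tm (i+j+1)] := by
  apply List.ext_getElem
  · simp [tmWord]; omega
  · intro k h1 h2
    simp only [tmWord, List.getElem_take, List.getElem_drop, List.getElem_map,
      List.getElem_range]
    simp [tmWord] at h1
    match k, h1 with
    | 0, _ => simp
    | 1, _ => simp [Nat.add_assoc]

/-- Whether the Thue–Morse word has equal letters at positions `k, k+1`. -/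
def bq (k : ℕ) : Bool := decide (tm k = tm (k+1))

/-- The number of adjacent equal pairs in the window `[i, i+m]`. -/
def C (i m : ℕ) : ℕ := (List.range m).countP (fun j => bq (i + j))

lemma bq_even (k : ℕ) : bq (2*k) = false := by
  simp only [bq, decide_eq_false_iff_not]
  exact tm_ne' k

lemma slide1 (i m : ℕ) : C i (m+1) = (if bq i then 1 else 0) + C (i+1) m := by
  unfold C
  rw [List.range_succ_eq_map, List.countP_cons, List.countP_map]
  have : ((fun j => bq (i + j)) ∘ Nat.succ) = fun j => bq (i + 1 + j) := by
    funext j; simp only [Function.comp]; congr 1; omega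
  rw [this]
  simp [add_comm]

lemma slide2 (i m : ℕ) : C i (m+1) = C i m + (if bq (i+m) then 1 else 0) := by
  unfold C
  rw [List.range_succ, List.countP_append]
  simp [List.countP_cons]

lemma stepEq (i m : ℕ) :
    (if bq i then 1 else 0) + C (i+1) m = C i m + (if bq (i+m) then 1 else 0) := by
  rw [← slide1, slide2]

lemma countP_add (l : List ℕ) (p q r : ℕ → Bool)
    (h : ∀ a ∈ l, (if p a then 1 else 0) + (if q a then 1 else 0)
        = (if r a then (1:ℕ) else 0)) :
    l.countP p + l.countP q = l.countP r := by
  induction l with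
  | nil => simp
  | cons a l ih =>
    simp only [List.countP_cons]
    have h1 := h a (List.mem_cons_self)
    have h2 := ih (fun b hb => h b (List.mem_cons_of_mem a hb))
    omega

lemma occ_eq (i m : ℕ) (a : Fin 2) :
    occCount (tmWord i (m+1)) [a,a] =
      (List.range m).countP (fun j => decide (tm (i+j) = a ∧ tm (i+j+1) = a)) := by
  unfold occCount
  rw [← List.countP_eq_length_filter, tmWord_length]
  rw [List.range_succ, List.countP_append]
  have hlast : List.countP
      (fun j => decide (((tmWord i (m+1)).drop j).take (List.length [a,a]) = [a,a])) [m] = 0 := by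
    simp only [List.countP_cons, List.countP_nil]
    have : (((tmWord i (m+1)).drop m).take 2).length = 1 := by
      simp [tmWord_length]
    simp only [List.length_cons, List.length_nil]
    rw [if_neg]
    intro hc
    rw [decide_eq_true_iff] at hc
    have := congrArg List.length hc
    simp [this] at *
  rw [hlast, Nat.add_zero]
  apply List.countP_congr
  intro j hj
  rw [List.mem_range] at hj
  have := tmSlice i (m+1) j (by omega)
  simp only [List.length_cons, List.length_nil, this]
  simp

lemma bridge (i n : ℕ) : pword (tmWord i n) = C i (n-1) := by
  cases n with
  | zero => rfl
  | succ m =>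
    unfold pword
    rw [occ_eq i m 0, occ_eq i m 1, Nat.succ_sub_one]
    apply countP_add
    intro j _
    show _ = if bq (i + j) then _ else _
    unfold bq
    generalize tm (i + j) = x
    generalize tm (i + j + 1) = y
    fin_cases x <;> fin_cases y <;> simp

lemma C_le (i m : ℕ) : C i m ≤ m := by
  calc C i m ≤ (List.range m).length := List.countP_le_length
  _ = m := List.length_range

lemma ivt_up (f : ℕ → ℕ) (h1 : ∀ i, f (i+1) ≤ f i + 1) :
    ∀ m i c, f i ≤ c → c ≤ f (i+m) → ∃ k, f k = c := by
  intro m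
  induction m with
  | zero => intro i c hc hc'; simp only [Nat.add_zero] at hc'; exact ⟨i, by omega⟩
  | succ m ih =>
    intro i c hc hc'
    by_cases h : f (i+1) ≤ c
    · exact ih (i+1) c h (by rw [show i+1+m = i+(m+1) by omega]; exact hc')
    · exact ⟨i, by have := h1 i; omega⟩

lemma ivt_down (f : ℕ → ℕ) (h2 : ∀ i, f i ≤ f (i+1) + 1) :
    ∀ m i c, c ≤ f i → f (i+m) ≤ c → ∃ k, f k = c := by
  intro m
  induction m with
  | zero => intro i c hc hc'; simp only [Nat.add_zero] at hc'; exact ⟨i, by omega⟩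
  | succ m ih =>
    intro i c hc hc'
    by_cases h : c ≤ f (i+1)
    · exact ih (i+1) c h (by rw [show i+1+m = i+(m+1) by omega]; exact hc')
    · exact ⟨i, by have := h2 i; omega⟩

lemma range_is_Icc (f : ℕ → ℕ) (M : ℕ) (hM : ∀ i, f i ≤ M)
    (h1 : ∀ i, f (i+1) ≤ f i + 1) (h2 : ∀ i, f i ≤ f (i+1) + 1) :
    ∃ a b : ℕ, a ≤ b ∧ Set.range f = Set.Icc a b := by
  have hne : (Set.range f).Nonempty := ⟨f 0, ⟨0, rfl⟩⟩
  have hbdd : BddAbove (Set.range f) := ⟨M, fun x ⟨i, hi⟩ => hi ▸ hM i⟩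
  refine ⟨sInf (Set.range f), sSup (Set.range f), ?_, ?_⟩
  · exact csInf_le_csSup hne ⟨0, fun x _ => Nat.zero_le x⟩ hbdd
  · apply Set.eq_of_subset_of_subset
    · intro x hx
      exact ⟨csInf_le ⟨0, fun y _ => Nat.zero_le y⟩ hx, le_csSup hbdd hx⟩
    · rintro c ⟨hc1, hc2⟩
      obtain ⟨ia, ha⟩ := Nat.sInf_mem hne
      obtain ⟨ib, hb⟩ := Nat.sSup_mem hne hbdd
      rcases le_total ia ib with h | h
      · obtain ⟨k, hk⟩ := ivt_up f h1 (ib - ia) ia c (by omega)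
          (by rw [show ia + (ib - ia) = ib by omega]; omega)
        exact ⟨k, hk⟩
      · obtain ⟨k, hk⟩ := ivt_down f h2 (ia - ib) ib c (by omega)
          (by rw [show ib + (ia - ib) = ia by omega]; omega)
        exact ⟨k, hk⟩

lemma pairs_eq_range (n : ℕ) :
    pairs n = Set.range (fun i => pword (tmWord i n)) := by
  ext m
  constructor
  · rintro ⟨w, hlen, ⟨i, hw⟩, hp⟩
    rw [hlen] at hw
    exact ⟨i, by show pword (tmWord i n) = m; rw [← hw]; exact hp⟩
  · rintro ⟨i, rfl⟩
    exact ⟨tmWord i n, tmWord_length i n, ⟨i, by rw [tmWord_length]⟩, rfl⟩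

lemma PAIRS_eq_range (n : ℕ) :
    PAIRS n = Set.range (fun k => pword (tmWord (2*k+1) n)) := by
  ext m
  constructor
  · rintro ⟨i, hi, hp⟩
    exact ⟨i/2, by
      show pword (tmWord (2*(i/2)+1) n) = m
      rw [show 2*(i/2)+1 = i from by omega]; exact hp⟩
  · rintro ⟨k, rfl⟩
    exact ⟨2*k+1, by omega, rfl⟩

theorem thueMorse_pairs_is_interval (n : ℕ) :
    (∃ a b : ℕ, a ≤ b ∧ pairs n = Set.Icc a b) ∧
    (∃ a b : ℕ, a ≤ b ∧ PAIRS (2 * n) = Set.Icc a b) := by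
  constructor
  · rw [pairs_eq_range]
    apply range_is_Icc _ n
    · intro i
      rw [bridge]
      have := C_le i (n-1); omega
    · intro i
      rw [bridge i n, bridge (i+1) n]
      have h := stepEq i (n-1)
      split_ifs at h <;> omega
    · intro i
      rw [bridge i n, bridge (i+1) n]
      have h := stepEq i (n-1)
      split_ifs at h <;> omega
  · rcases Nat.eq_zero_or_pos n with hn | hn
    · subst hn
      refine ⟨0, 0, le_refl 0, ?_⟩
      ext m
      simp only [Set.Icc_self, Set.mem_singleton_iff]
      constructor
      · rintro ⟨i, hi, hp⟩
        rw [bridge] at hp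
        simp [C] at hp
        omega
      · rintro rfl
        exact ⟨1, rfl, by rw [bridge]; simp [C]⟩
    · rw [PAIRS_eq_range]
      have key : ∀ k : ℕ, C ((2*k+1)+1+1) (2*n-1) ≤ C (2*k+1) (2*n-1) + 1 ∧
          C (2*k+1) (2*n-1) ≤ C ((2*k+1)+1+1) (2*n-1) + 1 := by
        intro k
        set i := 2*k+1 with hidef
        set m := 2*n-1 with hmdef
        have e1 := stepEq i m
        have e2 := stepEq (i+1) m
        have hb1 : bq (i+1) = false := by
          rw [show i+1 = 2*(k+1) from by omega]; exact bq_even _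
        have hb2 : bq (i+m) = false := by
          rw [show i+m = 2*(k+n) from by omega]; exact bq_even _
        rw [hb1] at e2
        rw [hb2] at e1
        simp only [Bool.false_eq_true, if_false] at e1 e2
        split_ifs at e1 e2 <;> omega
      apply range_is_Icc _ (2*n)
      · intro k
        rw [bridge]
        have := C_le (2*k+1) (2*n-1); omega
      · intro k
        rw [bridge, bridge]
        have h := (key k).1
        rw [show 2*(k+1)+1 = (2*k+1)+1+1 from by omega]
        exact h
      · intro k
        rw [bridge, bridge]
        have h := (key k).2
        rw [show 2*(k+1)+1 = (2*k+1)+1+1 from by omega]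
        exact h
end
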